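/- For integers 2 ≤ j ≤ i ≤ p+1, the binomial identity C(p+1−j, i−j)·C(p,j) = C(p,i)·C(i,j) + C(p,i−1)·C(i−1,j) holds. -/

import Mathlib

theorem stmt_12 (p i j : ℕ) (h2 : 2 ≤ j) (hji : j ≤ i) (hip : i ≤ p + 1) :
    (p + 1 - j).choose (i - j) * p.choose j
      = p.choose i * i.choose j + p.choose (i - 1) * (i - 1).choose j := by
  rcases eq_or_lt_of_le hji with rfl | hji'
  · have h1 : (j - 1).choose j = 0 := Nat.choose_eq_zero_of_lt (Nat.sub_lt (by omega) one_pos)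
    simp [Nat.sub_self, h1]
  · rcases eq_or_lt_of_le hip with rfl | hip'
    · have h0 : p.choose (p + 1) = 0 := Nat.choose_eq_zero_of_lt (by omega)
      have h1 : p + 1 - 1 = p := by omega
      simp [h0, h1, Nat.choose_self]
    · have hip2 : i ≤ p := by omega
      have hji2 : j ≤ i - 1 := by omega
      have e1 : p.choose i * i.choose j = p.choose j * (p - j).choose (i - j) :=
        Nat.choose_mul (n := p) hji
      have e2 : p.choose (i - 1) * (i - 1).choose j
          = p.choose j * (p - j).choose (i - 1 - j) := Nat.choose_mul (n := p) hji2
      rw [e1, e2, ← Nat.mul_add]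
      have e3 : i - j = (i - 1 - j) + 1 := by omega
      have e4 : p + 1 - j = (p - j) + 1 := by omega
      rw [e3, e4, Nat.choose_succ_succ', ← e3]
      ring
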